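/- Let U be a finite set with |U| = n ≥ 1, let g : Finset U → ℝ be submodular, let k be an integer with 0 ≤ k ≤ n, and set p := k/n. Then the expected value of g over a uniformly random k-element subset of U is at least its expected value over an independent sample with probability p; that is, (1 / C(n,k)) · ∑_{T ⊆ U, |T| = k} g(T) ≥ ∑_{T ⊆ U} p^{|T|} (1−p)^{n−|T|} g(T). -/

import Mathlib

open Finset

section Aux

lemma mychoose_two (m : ℕ) : m.choose 2 * 2 = m * (m - 1) := by
  induction m with
  | zero => rfl
  | succ m ih =>
      rw [Nat.choose_succ_succ, Nat.choose_one_right, Nat.add_mul, ih]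
      cases m with
      | zero => rfl
      | succ m => simp [Nat.succ_sub_one]; ring

lemma chord (a : ℕ → ℝ) (n k : ℕ) (hk : k + 1 ≤ n)
    (hc : ∀ j, 1 ≤ j → j + 1 ≤ n → a (j+1) + a (j-1) ≤ 2 * a j) :
    ∀ j ≤ n, a j ≤ a k + (a (k+1) - a k) * ((j:ℝ) - (k:ℝ)) := by
  set s := a (k+1) - a k with hs
  have mono : ∀ i i' : ℕ, i ≤ i' → i' + 1 ≤ n → a (i'+1) - a i' ≤ a (i+1) - a i := by
    intro i i' hii'
    induction i' , hii' using Nat.le_induction with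
    | base => intro _; exact le_refl _
    | succ i' hi ih =>
        intro h
        have h1 := hc (i'+1) (by omega) (by omega)
        have h2 := ih (by omega)
        simp only [Nat.add_sub_cancel] at h1
        linarith
  have up : ∀ j, k ≤ j → j ≤ n → a j ≤ a k + s * ((j:ℝ) - (k:ℝ)) := by
    intro j hkj
    induction j, hkj using Nat.le_induction with
    | base => intro _; simp
    | succ j hj ih =>
        intro h
        have h1 := ih (by omega)
        have h2 := mono k j hj (by omega)
        push_cast
        nlinarith [h1, h2]
  have down : ∀ m, m ≤ k → a (k - m) ≤ a k + s * (((k - m : ℕ):ℝ) - (k:ℝ)) := by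
    intro m
    induction m with
    | zero => intro _; simp
    | succ m ih =>
        intro hm
        have h1 := ih (by omega)
        have h2 := mono (k - (m+1)) k (by omega) hk
        have h3 : k - (m+1) + 1 = k - m := by omega
        rw [h3] at h2
        have c1 : ((k - m : ℕ):ℝ) = (k:ℝ) - (m:ℝ) := by
          rw [Nat.cast_sub (by omega)]
        have c2 : ((k - (m+1) : ℕ):ℝ) = (k:ℝ) - (m:ℝ) - 1 := by
          rw [Nat.cast_sub (by omega)]; push_cast; ring
        rw [c2]
        rw [c1] at h1
        nlinarith [h1, h2]
  intro j hj
  rcases le_or_gt k j with h | h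
  · exact up j h hj
  · have := down (k - j) (by omega)
    have h4 : k - (k - j) = j := by omega
    rwa [h4] at this

lemma binom_sum (p q : ℝ) (hpq : p + q = 1) (n : ℕ) :
    ∑ j ∈ Finset.range (n+1), (n.choose j : ℝ) * p^j * q^(n-j) = 1 := by
  have h := add_pow p q n
  rw [hpq, one_pow] at h
  calc ∑ j ∈ Finset.range (n+1), (n.choose j : ℝ) * p^j * q^(n-j)
      = ∑ j ∈ Finset.range (n+1), p^j * q^(n-j) * (n.choose j : ℝ) := by
        apply sum_congr rfl; intros; ring
    _ = 1 := h.symm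

lemma binom_mean (p q : ℝ) (hpq : p + q = 1) (n : ℕ) (hn : 1 ≤ n) :
    ∑ j ∈ Finset.range (n+1), (j:ℝ) * ((n.choose j : ℝ) * p^j * q^(n-j)) = (n:ℝ) * p := by
  rw [Finset.sum_range_succ']
  simp only [Nat.cast_zero, zero_mul, add_zero]
  have e : ∀ i ∈ Finset.range n,
      ((i+1:ℕ):ℝ) * ((n.choose (i+1):ℝ) * p^(i+1) * q^(n-(i+1)))
        = (n:ℝ) * p * (((n-1).choose i : ℝ) * p^i * q^((n-1)-i)) := by
    intro i _
    have hni : (i+1) * n.choose (i+1) = n * (n-1).choose i := by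
      have h := Nat.add_one_mul_choose_eq (n-1) i
      have h1 : n - 1 + 1 = n := by omega
      rw [h1] at h
      exact (mul_comm _ _).trans h.symm
    have h2 : n - (i+1) = (n-1) - i := by omega
    have hr : ((i+1:ℕ):ℝ) * (n.choose (i+1):ℝ) = (n:ℝ) * ((n-1).choose i : ℝ) := by
      exact_mod_cast congrArg (Nat.cast (R := ℝ)) hni
    rw [h2]
    calc ((i+1:ℕ):ℝ) * ((n.choose (i+1):ℝ) * p^(i+1) * q^((n-1)-i))
        = (((i+1:ℕ):ℝ) * (n.choose (i+1):ℝ)) * p^(i+1) * q^((n-1)-i) := by ring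
      _ = ((n:ℝ) * ((n-1).choose i : ℝ)) * p^(i+1) * q^((n-1)-i) := by rw [hr]
      _ = (n:ℝ) * p * (((n-1).choose i : ℝ) * p^i * q^((n-1)-i)) := by rw [pow_succ]; ring
  rw [sum_congr rfl (fun i hi => by exact_mod_cast e i hi), ← mul_sum]
  have h4 : n - 1 + 1 = n := by omega
  have hb := binom_sum p q hpq (n-1)
  rw [h4] at hb
  rw [hb, mul_one]

variable {U : Type*} [Fintype U] [DecidableEq U]

lemma card_superset (B : Finset U) (m : ℕ) (h : B.card ≤ m) :
    (((univ : Finset U).powersetCard m).filter fun A => B ⊆ A).card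
      = (Fintype.card U - B.card).choose (m - B.card) := by
  rw [← Finset.card_compl B, ← card_powersetCard (m - B.card) Bᶜ]
  apply card_bij' (fun A _ => A \ B) (fun C _ => C ∪ B)
  · intro A hA
    simp only [mem_filter, mem_powersetCard] at hA
    simp only [mem_powersetCard]
    refine ⟨fun x hx => ?_, ?_⟩
    · simp only [mem_sdiff] at hx; simpa using hx.2
    · rw [card_sdiff_of_subset hA.2, hA.1.2]
  · intro C hC
    simp only [mem_powersetCard] at hC
    have hd : Disjoint C B := by
      rw [Finset.disjoint_right]
      intro x hx hxC
      have := hC.1 hxC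
      simp at this
      exact this hx
    simp only [mem_filter, mem_powersetCard]
    refine ⟨⟨subset_univ _, ?_⟩, subset_union_right⟩
    rw [card_union_of_disjoint hd, hC.2]
    omega
  · intro A hA
    simp only [mem_filter, mem_powersetCard] at hA
    exact sdiff_union_of_subset hA.2
  · intro C hC
    simp only [mem_powersetCard] at hC
    have hd : Disjoint C B := by
      rw [Finset.disjoint_right]
      intro x hx hxC
      have := hC.1 hxC
      simp at this
      exact this hx
    exact union_sdiff_cancel_right hd

lemma sum_grouped (f : Finset U → ℝ) (m r : ℕ) (h : r ≤ m) :
    ∑ A ∈ (univ : Finset U).powersetCard m, ∑ B ∈ A.powersetCard r, f B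
      = ((Fintype.card U - r).choose (m - r) : ℝ) * ∑ B ∈ (univ : Finset U).powersetCard r, f B := by
  have h1 : ∀ A ∈ (univ : Finset U).powersetCard m,
      ∑ B ∈ A.powersetCard r, f B
        = ∑ B ∈ (univ : Finset U).powersetCard r, if B ⊆ A then f B else 0 := by
    intro A _
    rw [← sum_filter]
    congr 1
    ext B
    simp only [mem_filter, mem_powersetCard]
    constructor
    · rintro ⟨h1, h2⟩; exact ⟨⟨subset_univ _, h2⟩, h1⟩
    · rintro ⟨⟨_, h2⟩, h1⟩; exact ⟨h1, h2⟩
  rw [sum_congr rfl h1, sum_comm]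
  rw [mul_sum]
  apply sum_congr rfl
  intro B hB
  simp only [mem_powersetCard] at hB
  rw [← sum_filter, sum_const, nsmul_eq_mul, card_superset B m (hB.2 ▸ h), hB.2]

lemma pointwise_step (g : Finset U → ℝ)
    (hsub : ∀ A B : Finset U, g (A ∪ B) + g (A ∩ B) ≤ g A + g B)
    (A B : Finset U) (hBA : B ⊆ A) (hc : A.card = B.card + 2) :
    g A + g B ≤ ∑ x ∈ A \ B, g (insert x B) := by
  have hcard : (A \ B).card = 2 := by rw [card_sdiff_of_subset hBA]; omega
  obtain ⟨x, y, hxy, hs⟩ := card_eq_two.mp hcard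
  have hx : x ∈ A \ B := by rw [hs]; simp
  have hy : y ∈ A \ B := by rw [hs]; simp
  simp only [mem_sdiff] at hx hy
  rw [hs, sum_pair hxy]
  have hu : insert x B ∪ insert y B = A := by
    have h0 : B ∪ A \ B = A := union_sdiff_of_subset hBA
    rw [← h0, hs]
    ext a
    simp only [mem_union, mem_insert, mem_singleton]
    tauto
  have hi : insert x B ∩ insert y B = B := by
    ext a
    simp only [mem_inter, mem_insert]
    constructor
    · rintro ⟨h1 | h1, h2 | h2⟩ <;> first | assumption | (subst h1; subst h2; exact absurd rfl hxy)
    · intro h; exact ⟨Or.inr h, Or.inr h⟩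
  calc g A + g B = g (insert x B ∪ insert y B) + g (insert x B ∩ insert y B) := by rw [hu, hi]
    _ ≤ _ := hsub _ _

lemma reindex_step (g : Finset U → ℝ) (A : Finset U) (j : ℕ) (h1 : 1 ≤ j) :
    ∑ B ∈ A.powersetCard (j-1), ∑ x ∈ A \ B, g (insert x B)
      = ∑ C ∈ A.powersetCard j, ∑ _x ∈ C, g C := by
  rw [sum_sigma', sum_sigma']
  apply sum_nbij' (fun q => (⟨insert q.2 q.1, q.2⟩ : Σ _C : Finset U, U))
    (fun q => (⟨q.1.erase q.2, q.2⟩ : Σ _B : Finset U, U))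
  · rintro ⟨B, x⟩ hq
    simp only [mem_sigma, mem_powersetCard, mem_sdiff] at hq ⊢
    obtain ⟨⟨hBA, hBc⟩, hxA, hxB⟩ := hq
    refine ⟨⟨insert_subset hxA hBA, ?_⟩, mem_insert_self _ _⟩
    rw [card_insert_of_notMem hxB, hBc]; omega
  · rintro ⟨C, x⟩ hq
    simp only [mem_sigma, mem_powersetCard, mem_sdiff] at hq ⊢
    obtain ⟨⟨hCA, hCc⟩, hxC⟩ := hq
    refine ⟨⟨(erase_subset _ _).trans hCA, ?_⟩, hCA hxC, notMem_erase _ _⟩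
    rw [card_erase_of_mem hxC, hCc]
  · rintro ⟨B, x⟩ hq
    simp only [mem_sigma, mem_powersetCard, mem_sdiff] at hq
    simp [erase_insert hq.2.2]
  · rintro ⟨C, x⟩ hq
    simp only [mem_sigma, mem_powersetCard, mem_sdiff] at hq
    simp [insert_erase hq.2]
  · rintro ⟨B, x⟩ hq
    simp only [mem_sigma, mem_powersetCard, mem_sdiff] at hq
    simp [insert_erase, erase_insert hq.2.2]

noncomputable def levSum (g : Finset U → ℝ) (m : ℕ) : ℝ :=
  ∑ T ∈ (univ : Finset U).powersetCard m, g T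

lemma step_ineq (g : Finset U → ℝ)
    (hsub : ∀ A B : Finset U, g (A ∪ B) + g (A ∩ B) ≤ g A + g B)
    (j : ℕ) (h1 : 1 ≤ j) (h2 : j + 1 ≤ Fintype.card U) :
    ((j+1).choose 2 : ℝ) * levSum g (j+1)
        + ((Fintype.card U - j + 1).choose 2 : ℝ) * levSum g (j-1)
      ≤ (j : ℝ) * ((Fintype.card U : ℝ) - j) * levSum g j := by
  set n := Fintype.card U with hn
  have key : ∑ A ∈ (univ : Finset U).powersetCard (j+1), ∑ B ∈ A.powersetCard (j-1), (g A + g B)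
      ≤ ∑ A ∈ (univ : Finset U).powersetCard (j+1),
          ∑ B ∈ A.powersetCard (j-1), ∑ x ∈ A \ B, g (insert x B) := by
    apply sum_le_sum; intro A hA; apply sum_le_sum; intro B hB
    simp only [mem_powersetCard] at hA hB
    exact pointwise_step g hsub A B hB.1 (by omega)
  have lhs_eq : ∑ A ∈ (univ : Finset U).powersetCard (j+1), ∑ B ∈ A.powersetCard (j-1), (g A + g B)
      = ((j+1).choose 2 : ℝ) * levSum g (j+1) + ((n - j + 1).choose 2 : ℝ) * levSum g (j-1) := by
    have e1 : ∀ A ∈ (univ : Finset U).powersetCard (j+1),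
        ∑ B ∈ A.powersetCard (j-1), (g A + g B)
          = ((j+1).choose 2 : ℝ) * g A + ∑ B ∈ A.powersetCard (j-1), g B := by
      intro A hA
      simp only [mem_powersetCard] at hA
      have hcc : (j+1).choose (j-1) = (j+1).choose 2 := by
        have h3 : j + 1 - 2 = j - 1 := by omega
        rw [← Nat.choose_symm (show 2 ≤ j + 1 by omega), h3]
      rw [sum_add_distrib, sum_const, card_powersetCard, hA.2, hcc, nsmul_eq_mul]
    rw [sum_congr rfl e1, sum_add_distrib, ← mul_sum, sum_grouped g (j+1) (j-1) (by omega)]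
    have : n - (j-1) = n - j + 1 := by omega
    have h2' : (j+1) - (j-1) = 2 := by omega
    rw [this, h2']
    rfl
  have rhs_eq : ∑ A ∈ (univ : Finset U).powersetCard (j+1),
        ∑ B ∈ A.powersetCard (j-1), ∑ x ∈ A \ B, g (insert x B)
      = (j : ℝ) * ((n : ℝ) - j) * levSum g j := by
    have e1 : ∀ A ∈ (univ : Finset U).powersetCard (j+1),
        ∑ B ∈ A.powersetCard (j-1), ∑ x ∈ A \ B, g (insert x B)
          = ∑ C ∈ A.powersetCard j, (j : ℝ) * g C := by
      intro A _
      rw [reindex_step g A j h1]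
      apply sum_congr rfl
      intro C hC
      simp only [mem_powersetCard] at hC
      rw [sum_const, hC.2, nsmul_eq_mul]
    rw [sum_congr rfl e1]
    have e2 : ∀ A ∈ (univ : Finset U).powersetCard (j+1),
        ∑ C ∈ A.powersetCard j, (j : ℝ) * g C = (j : ℝ) * ∑ C ∈ A.powersetCard j, g C := by
      intro A _; rw [mul_sum]
    rw [sum_congr rfl e2, ← mul_sum, sum_grouped g (j+1) j (by omega)]
    have h3 : (j+1) - j = 1 := by omega
    rw [h3, Nat.choose_one_right, levSum]
    rw [Nat.cast_sub (by omega)]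
    ring
  linarith [key, lhs_eq ▸ key]

noncomputable def avg (g : Finset U → ℝ) (m : ℕ) : ℝ :=
  levSum g m / ((Fintype.card U).choose m : ℝ)

lemma concave_avg (g : Finset U → ℝ)
    (hsub : ∀ A B : Finset U, g (A ∪ B) + g (A ∩ B) ≤ g A + g B)
    (j : ℕ) (h1 : 1 ≤ j) (h2 : j + 1 ≤ Fintype.card U) :
    avg g (j+1) + avg g (j-1) ≤ 2 * avg g j := by
  set n := Fintype.card U with hn
  have hjn : j < n := by omega
  have hA : ((j+1).choose 2 : ℝ) * 2 * (n.choose (j+1) : ℝ)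
      = (j : ℝ) * ((n : ℝ) - (j : ℝ)) * (n.choose j : ℝ) := by
    have : (j+1).choose 2 * 2 * n.choose (j+1) = j * (n - j) * n.choose j := by
      rw [mychoose_two]
      have h := Nat.choose_succ_right_eq n j
      calc (j+1) * ((j+1) - 1) * n.choose (j+1) = j * (n.choose (j+1) * (j+1)) := by
            simp [Nat.add_sub_cancel]; ring
        _ = j * (n.choose j * (n - j)) := by rw [h]
        _ = j * (n - j) * n.choose j := by ring
    calc ((j+1).choose 2 : ℝ) * 2 * (n.choose (j+1) : ℝ)
        = (((j+1).choose 2 * 2 * n.choose (j+1) : ℕ) : ℝ) := by push_cast; ring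
      _ = ((j * (n - j) * n.choose j : ℕ) : ℝ) := by rw [this]
      _ = (j : ℝ) * ((n : ℝ) - (j : ℝ)) * (n.choose j : ℝ) := by
          push_cast [Nat.cast_sub hjn.le]; ring
  have hB : ((n - j + 1).choose 2 : ℝ) * 2 * (n.choose (j-1) : ℝ)
      = (j : ℝ) * ((n : ℝ) - (j : ℝ)) * (n.choose j : ℝ) := by
    have hnat : (n - j + 1).choose 2 * 2 * n.choose (j-1) = j * (n - j) * n.choose j := by
      rw [mychoose_two]
      have h := Nat.choose_succ_right_eq n (j-1)
      have hj1 : j - 1 + 1 = j := by omega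
      rw [hj1] at h
      have hnj1 : n - (j - 1) = n - j + 1 := by omega
      rw [hnj1] at h
      calc (n - j + 1) * ((n - j + 1) - 1) * n.choose (j-1)
          = (n - j) * (n.choose (j-1) * (n - j + 1)) := by simp [Nat.add_sub_cancel]; ring
        _ = (n - j) * (n.choose j * j) := by rw [← h]
        _ = j * (n - j) * n.choose j := by ring
    calc ((n - j + 1).choose 2 : ℝ) * 2 * (n.choose (j-1) : ℝ)
        = (((n - j + 1).choose 2 * 2 * n.choose (j-1) : ℕ) : ℝ) := by push_cast; ring
      _ = ((j * (n - j) * n.choose j : ℕ) : ℝ) := by rw [hnat]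
      _ = (j : ℝ) * ((n : ℝ) - (j : ℝ)) * (n.choose j : ℝ) := by
          push_cast [Nat.cast_sub hjn.le]; ring
  have hc0 : (0:ℝ) < (n.choose j : ℝ) := by exact_mod_cast Nat.choose_pos hjn.le
  have hD : (0:ℝ) < (j : ℝ) * ((n : ℝ) - (j : ℝ)) * (n.choose j : ℝ) := by
    apply mul_pos (mul_pos _ _) hc0
    · exact_mod_cast h1
    · have : (j:ℝ) < n := by exact_mod_cast hjn
      linarith
  have hK1 : ((j+1).choose 2 : ℝ) * 2 ≠ 0 := by
    have : 0 < (j+1).choose 2 := Nat.choose_pos (by omega)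
    positivity
  have hK2 : ((n - j + 1).choose 2 : ℝ) * 2 ≠ 0 := by
    have : 0 < (n - j + 1).choose 2 := Nat.choose_pos (by omega)
    positivity
  have e1 : avg g (j+1) = ((j+1).choose 2 : ℝ) * 2 * levSum g (j+1)
      / ((j : ℝ) * ((n : ℝ) - (j : ℝ)) * (n.choose j : ℝ)) := by
    rw [avg, ← hA, mul_div_mul_left _ _ hK1]
  have e2 : avg g (j-1) = ((n - j + 1).choose 2 : ℝ) * 2 * levSum g (j-1)
      / ((j : ℝ) * ((n : ℝ) - (j : ℝ)) * (n.choose j : ℝ)) := by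
    rw [avg, ← hB, mul_div_mul_left _ _ hK2]
  have hMpos : (0:ℝ) < (j : ℝ) * ((n : ℝ) - (j : ℝ)) := by
    apply mul_pos
    · exact_mod_cast h1
    · have : (j:ℝ) < n := by exact_mod_cast hjn
      linarith
  have e3 : (j : ℝ) * ((n : ℝ) - (j : ℝ)) * (2 * levSum g j)
      / ((j : ℝ) * ((n : ℝ) - (j : ℝ)) * (n.choose j : ℝ)) = 2 * avg g j := by
    rw [mul_div_mul_left _ _ (ne_of_gt hMpos), avg, mul_div_assoc]
  rw [e1, e2, ← e3, ← add_div, div_le_div_iff_of_pos_right hD]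
  have := step_ineq g hsub j h1 h2
  nlinarith [this]

end Aux

/-- Sampling without replacement dominates independent sampling for submodular
functions: the average of a submodular `g` over uniformly random `k`-subsets of a
ground set of size `n` is at least the expectation of `g` under independent
sampling with probability `p = k / n`. -/
theorem avg_powersetCard_ge_independent_sampling
    {U : Type*} [Fintype U] [DecidableEq U]
    (g : Finset U → ℝ)
    (hsub : ∀ A B : Finset U, g (A ∪ B) + g (A ∩ B) ≤ g A + g B)
    (n k : ℕ) (hn : 1 ≤ n) (hcard : Fintype.card U = n) (hk : k ≤ n)
    (p : ℝ) (hp : p = (k : ℝ) / (n : ℝ)) :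
    ∑ T : Finset U, p ^ T.card * (1 - p) ^ (n - T.card) * g T ≤
      (1 / (n.choose k : ℝ)) *
        ∑ T ∈ (Finset.univ : Finset U).powersetCard k, g T := by
  subst hcard
  set n := Fintype.card U with hnn
  have hn0 : (n:ℝ) ≠ 0 := Nat.cast_ne_zero.mpr (by omega)
  have hgroup : ∑ T : Finset U, p ^ T.card * (1 - p) ^ (n - T.card) * g T
      = ∑ j ∈ Finset.range (n+1), p^j * (1-p)^(n-j) * levSum g j := by
    rw [← powerset_univ, sum_powerset, card_univ]
    apply sum_congr rfl
    intro j _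
    rw [levSum, mul_sum]
    apply sum_congr rfl
    intro T hT
    rw [(mem_powersetCard.mp hT).2]
  rw [hgroup]
  rcases eq_or_lt_of_le hk with hkn | hkn
  · -- k = n : p = 1, both sides equal g univ
    subst hkn
    have hp1 : p = 1 := by rw [hp]; field_simp
    have hterm : ∑ j ∈ Finset.range (n+1), p^j*(1-p)^(n-j)*levSum g j = levSum g n := by
      rw [Finset.sum_eq_single_of_mem n (self_mem_range_succ n)]
      · rw [hp1]; norm_num
      · intro j hj hjn
        have hnj : n - j ≠ 0 := by simp only [mem_range] at hj; omega
        rw [hp1]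
        simp [zero_pow hnj]
    rw [hterm, Nat.choose_self]
    norm_num
    simp only [levSum]
    exact le_refl _
  · -- main case : k + 1 ≤ n
    have hk1 : k + 1 ≤ n := hkn
    have hnposR : (0:ℝ) < n := by
      have : 0 < n := by omega
      exact_mod_cast this
    have hp0 : 0 ≤ p := by rw [hp]; positivity
    have hp1 : p ≤ 1 := by
      rw [hp, div_le_one hnposR]
      exact_mod_cast hk
    have hq0 : (0:ℝ) ≤ 1 - p := by linarith
    have hchord := chord (avg g) n k hk1 (fun j h1 h2 => concave_avg g hsub j h1 h2)
    have hS : ∀ j, j ≤ n → levSum g j = (n.choose j : ℝ) * avg g j := by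
      intro j hj
      rw [avg, mul_div_cancel₀]
      exact Nat.cast_ne_zero.mpr (Nat.choose_pos hj).ne'
    have hsum1 := binom_sum p (1-p) (by ring) n
    have hmean := binom_mean p (1-p) (by ring) n hn
    have hnp : (n:ℝ) * p = k := by rw [hp]; field_simp
    set s := avg g (k+1) - avg g k with hsdef
    calc ∑ j ∈ Finset.range (n+1), p^j*(1-p)^(n-j)*levSum g j
        = ∑ j ∈ Finset.range (n+1), ((n.choose j:ℝ)*p^j*(1-p)^(n-j)) * avg g j := by
          apply sum_congr rfl
          intro j hj
          rw [hS j (by simp only [mem_range] at hj; omega)]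
          ring
      _ ≤ ∑ j ∈ Finset.range (n+1),
            ((n.choose j:ℝ)*p^j*(1-p)^(n-j)) * (avg g k + s * ((j:ℝ)-(k:ℝ))) := by
          apply sum_le_sum
          intro j hj
          apply mul_le_mul_of_nonneg_left
          · exact hchord j (by simp only [mem_range] at hj; omega)
          · exact mul_nonneg (mul_nonneg (Nat.cast_nonneg _) (pow_nonneg hp0 _))
              (pow_nonneg hq0 _)
      _ = avg g k := by
          have expand : ∀ j ∈ Finset.range (n+1),
              ((n.choose j:ℝ)*p^j*(1-p)^(n-j)) * (avg g k + s*((j:ℝ)-(k:ℝ)))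
                = avg g k * ((n.choose j:ℝ)*p^j*(1-p)^(n-j))
                  + s * ((j:ℝ) * ((n.choose j:ℝ)*p^j*(1-p)^(n-j)))
                  - (s*(k:ℝ)) * ((n.choose j:ℝ)*p^j*(1-p)^(n-j)) := by
            intros; ring
          rw [sum_congr rfl expand, sum_sub_distrib, sum_add_distrib,
            ← mul_sum, ← mul_sum, ← mul_sum, hsum1, hmean, hnp]
          ring
      _ = (1 / (n.choose k : ℝ)) * ∑ T ∈ (Finset.univ : Finset U).powersetCard k, g T := by
          rw [avg]
          simp only [levSum]
          rw [one_div, inv_mul_eq_div]
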